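/- (Lazy learner affinity; core of Theorem 6.) Let Z be a finite alphabet with n = |Z| ≥ 1, let m ≥ 1, let P be the uniform probability mass function on Z, and let the learning machine be the lazy learner whose hypothesis is the type (empirical count vector) of the training set: Q assigns to each S ∈ Z^m the point mass at (N_z(S))_{z∈Z}. Then the mutual affinity between a uniformly drawn training example Z_trn and the hypothesis equals I_P(Z_trn, H) = (n/(2m)) · ∑_{k=0}^{m} C(m,k) · (1/n)^k · (1−1/n)^{m−k} · |k − m/n|, where C(m,k) is the binomial coefficient. -/

import Mathlib

/-- Total variation distance between two pmfs: `1 - ∑ min`. -/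
noncomputable def tv {A : Type*} (p q : A → ℝ) : ℝ := 1 - ∑' a, min (p a) (q a)

/-- `p` is a probability mass function: nonnegative and summing to `1`. -/
def IsPMF {A : Type*} (p : A → ℝ) : Prop := (∀ a, 0 ≤ p a) ∧ HasSum p 1

/-- Product pmf `P^{⊗m}` of `m` i.i.d. draws from `P`. -/
noncomputable def prodPMF {Z : Type*} (m : ℕ) (P : Z → ℝ) (S : Fin m → Z) : ℝ :=
  ∏ i, P (S i)

/-- Joint pmf of a uniformly drawn training example `Z_trn` and the inferred
hypothesis `H`: `μ(z,h) = ∑_S P^{⊗m}(S) · (1/m)∑_i 1{S_i = z} · Q(h|S)`. -/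
noncomputable def jointZH {Z H : Type*} (m : ℕ) (P : Z → ℝ)
    (Q : (Fin m → Z) → H → ℝ) (z : Z) (h : H) : ℝ :=
  haveI := Classical.decEq Z
  ∑' S : Fin m → Z,
    prodPMF m P S * ((1 / (m : ℝ)) * ∑ i, if S i = z then (1 : ℝ) else 0) * Q S h

/-- Marginal of `Z_trn` under the joint pmf `jointZH`. -/
noncomputable def margZ {Z H : Type*} (m : ℕ) (P : Z → ℝ)
    (Q : (Fin m → Z) → H → ℝ) (z : Z) : ℝ :=
  ∑' h : H, jointZH m P Q z h

/-- Marginal of the hypothesis `H` under the joint pmf `jointZH`. -/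
noncomputable def margH {Z H : Type*} (m : ℕ) (P : Z → ℝ)
    (Q : (Fin m → Z) → H → ℝ) (h : H) : ℝ :=
  ∑' z : Z, jointZH m P Q z h

/-- Mutual affinity `I(Z_trn, H) = ‖μ_Z ⊗ μ_H, μ‖`. -/
noncomputable def affinity {Z H : Type*} (m : ℕ) (P : Z → ℝ)
    (Q : (Fin m → Z) → H → ℝ) : ℝ :=
  tv (fun p : Z × H => margZ m P Q p.1 * margH m P Q p.2)
    (fun p : Z × H => jointZH m P Q p.1 p.2)

/-- True risk `R(𝓛) = ∑_S P^{⊗m}(S) ∑_h Q(h|S) ∑_z P(z)·L(h,z)`. -/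
noncomputable def trueRisk {Z H : Type*} (m : ℕ) (P : Z → ℝ)
    (Q : (Fin m → Z) → H → ℝ) (L : H → Z → ℝ) : ℝ :=
  ∑' S : Fin m → Z, prodPMF m P S * ∑' h : H, Q S h * ∑' z : Z, P z * L h z

/-- Empirical risk `R_emp(𝓛) = ∑_S P^{⊗m}(S) ∑_h Q(h|S)·(1/m)∑_i L(h,S_i)`. -/
noncomputable def empRisk {Z H : Type*} (m : ℕ) (P : Z → ℝ)
    (Q : (Fin m → Z) → H → ℝ) (L : H → Z → ℝ) : ℝ :=
  ∑' S : Fin m → Z, prodPMF m P S * ∑' h : H, Q S h * ((1 / (m : ℝ)) * ∑ i, L h (S i))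

/-- Learning capacity `C^(m)(𝓛) = sup_P I(Z_trn, H)`. -/
noncomputable def capacity {Z H : Type*} (m : ℕ)
    (Q : (Fin m → Z) → H → ℝ) : ℝ :=
  sSup {c : ℝ | ∃ P : Z → ℝ, IsPMF P ∧ c = affinity m P Q}

open Finset Polynomial

lemma swap_sum_prod {Z M : Type*} [Fintype Z] [CommSemiring M] :
    ∀ (m : ℕ) (f : Fin m → Z → M),
      ∑ S : Fin m → Z, ∏ i, f i (S i) = ∏ i, ∑ y, f i y := by
  intro m
  induction m with
  | zero => intro f; simp
  | succ m ih =>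
    intro f
    rw [← (Fin.consEquiv (fun _ : Fin (m+1) => Z)).sum_comp]
    simp only [Fintype.sum_prod_type, Fin.consEquiv_apply]
    simp only [Fin.prod_univ_succ, Fin.cons_zero, Fin.cons_succ]
    rw [← Finset.sum_mul_sum]
    · rw [ih fun i y => f i.succ y]

lemma key_poly {Z : Type*} [Fintype Z] [DecidableEq Z] (m : ℕ) (z : Z) :
    ∑ S : Fin m → Z, (X : ℝ[X]) ^ ((univ.filter fun i => S i = z).card)
      = (X + C ((Fintype.card Z : ℝ) - 1)) ^ m := by
  have h1 : ∀ S : Fin m → Z,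
      (X : ℝ[X]) ^ ((univ.filter fun i => S i = z).card)
        = ∏ i, (if S i = z then (X : ℝ[X]) else 1) := by
    intro S
    rw [← Finset.prod_filter, Finset.prod_const]
  simp_rw [h1]
  rw [swap_sum_prod m (fun _ y => if y = z then (X : ℝ[X]) else 1)]
  have h2 : ∑ y : Z, (if y = z then (X : ℝ[X]) else 1)
      = X + C ((Fintype.card Z : ℝ) - 1) := by
    have : ∀ y : Z, (if y = z then (X : ℝ[X]) else 1)
        = (if y = z then X - 1 else 0) + 1 := by
      intro y; split <;> ring
    simp_rw [this, Finset.sum_add_distrib, Finset.sum_ite_eq' univ z (fun _ => (X:ℝ[X]) - 1)]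
    simp only [Finset.sum_const, Finset.card_univ, nsmul_eq_mul, mul_one, mem_univ, if_true]
    rw [Polynomial.C_sub, Polynomial.C_1, map_natCast]
    ring
  rw [h2, Finset.prod_const, Finset.card_univ, Fintype.card_fin]

lemma count_real {Z : Type*} [Fintype Z] [DecidableEq Z] (m : ℕ) (z : Z) (k : ℕ) :
    ∑ S : Fin m → Z, (if (univ.filter fun i => S i = z).card = k then (1:ℝ) else 0)
      = (m.choose k : ℝ) * ((Fintype.card Z : ℝ) - 1) ^ (m - k) := by
  have := congrArg (fun p : ℝ[X] => p.coeff k) (key_poly (Z := Z) m z)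
  simp only [finset_sum_coeff, Polynomial.coeff_X_pow] at this
  simp_rw [eq_comm (a := k)] at this
  rw [this, Polynomial.coeff_X_add_C_pow]
  ring

/-- Lazy learner affinity, core of Theorem 6: for the lazy
learner whose hypothesis is the type (empirical count vector) of the training
set, under the uniform distribution on a finite alphabet of size `n`, the
mutual affinity equals
`(n/(2m)) · ∑_{k=0}^m C(m,k) (1/n)^k (1-1/n)^{m-k} |k - m/n|`. -/
theorem stmt18 {Z : Type*} [Fintype Z] [DecidableEq Z] (n m : ℕ)
    (hn : n = Fintype.card Z) (hn1 : 1 ≤ n) (hm : 1 ≤ m)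
    (P : Z → ℝ) (hP : ∀ z, P z = 1 / (n : ℝ))
    (Q : (Fin m → Z) → (Z → ℕ) → ℝ)
    (hQ : ∀ S h, Q S h =
      if h = fun z => (Finset.univ.filter fun i => S i = z).card then 1 else 0) :
    affinity m P Q = ((n : ℝ) / (2 * m)) * ∑ k ∈ Finset.range (m + 1),
      (m.choose k : ℝ) * (1 / (n : ℝ)) ^ k * (1 - 1 / (n : ℝ)) ^ (m - k) *
        |(k : ℝ) - (m : ℝ) / (n : ℝ)| := by
  classical
  have hN1 : (1:ℝ) ≤ (n:ℝ) := by exact_mod_cast hn1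
  have hN0 : (n:ℝ) ≠ 0 := by linarith
  have hm0 : (m:ℝ) ≠ 0 := by
    have : (1:ℝ) ≤ (m:ℝ) := by exact_mod_cast hm
    linarith
  set N : ℝ := (n : ℝ) with hNdef
  set c : ℝ := (1/N)^m with hcdef
  set T : (Fin m → Z) → Z → ℕ :=
    fun S z => (univ.filter fun i => S i = z).card with hTdef
  set 𝒯 : Finset (Z → ℕ) := univ.image T with h𝒯def
  set W : (Z → ℕ) → ℝ := fun h => ∑ S : Fin m → Z, if h = T S then c else 0
    with hWdef
  have hc0 : 0 ≤ c := by positivity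
  have hW0 : ∀ h, 0 ≤ W h := by
    intro h; apply Finset.sum_nonneg; intro S _; split <;> simp [hc0]
  have hW_off : ∀ h ∉ 𝒯, W h = 0 := by
    intro h hh
    apply Finset.sum_eq_zero; intro S _
    rw [if_neg]; rintro rfl
    exact hh (Finset.mem_image_of_mem T (mem_univ S))
  have hQ' : ∀ S h, Q S h = if h = T S then (1:ℝ) else 0 := fun S h => hQ S h
  have hsumT : ∀ S : Fin m → Z, ∑ z, (T S z : ℝ) = m := by
    intro S
    rw [← Nat.cast_sum]
    norm_cast
    rw [← Finset.card_eq_sum_card_fiberwise (f := S) (t := univ) (fun x _ => mem_univ _)]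
    simp
  have hT_le : ∀ (S : Fin m → Z) z, T S z ≤ m := by
    intro S z; simpa using Finset.card_filter_le univ (fun i => S i = z)
  have collapse : ∀ F : (Z → ℕ) → ℝ,
      ∑ h ∈ 𝒯, W h * F h = ∑ S : Fin m → Z, c * F (T S) := by
    intro F
    simp only [hWdef, Finset.sum_mul, ite_mul, zero_mul]
    rw [Finset.sum_comm]
    apply Finset.sum_congr rfl; intro S _
    rw [Finset.sum_ite_eq' 𝒯 (T S) (fun h => c * F h)]
    rw [if_pos (Finset.mem_image_of_mem T (mem_univ S))]
  have hprod : ∀ S : Fin m → Z, prodPMF m P S = c := by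
    intro S
    simp only [prodPMF, hP, hcdef]
    rw [Finset.prod_const, Finset.card_univ, Fintype.card_fin]
  have hcount : ∀ (S : Fin m → Z) (z : Z) (inst : DecidableEq Z),
      (∑ i : Fin m, @ite ℝ (S i = z) (inst (S i) z) 1 0) = (T S z : ℝ) := by
    intro S z inst
    rw [Finset.sum_boole, hTdef]
    norm_cast
    simp only []
    congr
  have hjoint : ∀ z h, jointZH m P Q z h = (h z : ℝ)/m * W h := by
    intro z h
    simp only [jointZH, tsum_fintype]
    rw [hWdef, Finset.mul_sum]
    apply Finset.sum_congr rfl; intro S _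
    rw [hprod, hQ' S h, hcount S z (Classical.decEq Z)]
    split_ifs with he
    · subst he; ring
    · ring
  have hmargH : ∀ h, margH m P Q h = W h := by
    intro h
    rw [margH, tsum_fintype]
    simp_rw [hjoint]
    rw [← Finset.sum_mul, ← Finset.sum_div]
    by_cases hh : h ∈ 𝒯
    · obtain ⟨S, -, rfl⟩ := Finset.mem_image.mp hh
      rw [hsumT, div_self hm0, one_mul]
    · rw [hW_off h hh, mul_zero]
  have hfix : ∀ (i : Fin m) (z : Z),
      ∑ S : Fin m → Z, (if S i = z then (1:ℝ) else 0) = N^(m-1) := by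
    intro i z
    have e1 : ∀ S : Fin m → Z, (if S i = z then (1:ℝ) else 0)
        = ∏ j, (if j = i then (if S j = z then (1:ℝ) else 0) else 1) := by
      intro S
      rw [Finset.prod_eq_single i (fun j _ hj => if_neg hj)
        (fun hni => absurd (mem_univ i) hni), if_pos rfl]
    simp_rw [e1]
    rw [swap_sum_prod m (fun j y => if j = i then (if y = z then (1:ℝ) else 0) else 1)]
    have e2 : ∀ j : Fin m,
        (∑ y : Z, if j = i then (if y = z then (1:ℝ) else 0) else 1)
          = if j = i then 1 else N := by
      intro j; split_ifs with hj
      · rw [Finset.sum_ite_eq' univ z fun _ => (1:ℝ)]; simp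
      · rw [Finset.sum_const, Finset.card_univ, ← hn]; simp
        exact hNdef.symm
    simp_rw [e2]
    rw [← Finset.mul_prod_erase univ _ (mem_univ i), if_pos rfl, one_mul]
    rw [Finset.prod_congr rfl (fun j hj => if_neg (Finset.mem_erase.mp hj).1),
      Finset.prod_const, Finset.card_erase_of_mem (mem_univ i), Finset.card_univ,
      Fintype.card_fin]
  have hpow : c * N^(m-1) = 1/N := by
    have h1 : m - 1 + 1 = m := Nat.succ_pred_eq_of_pos hm
    have hNm1 : N^(m-1) ≠ 0 := pow_ne_zero _ hN0
    rw [hcdef, ← h1, pow_succ]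
    field_simp
    rw [Nat.add_sub_cancel, one_div, inv_pow, inv_mul_cancel₀ hNm1]
  have hmargZ : ∀ z, margZ m P Q z = 1/N := by
    intro z
    rw [margZ]
    rw [tsum_eq_sum (s := 𝒯) (fun h hh => by rw [hjoint, hW_off h hh, mul_zero])]
    simp_rw [hjoint]
    have hcomm : ∑ h ∈ 𝒯, (h z:ℝ)/m * W h = ∑ h ∈ 𝒯, W h * ((h z:ℝ)/m) :=
      Finset.sum_congr rfl fun h _ => mul_comm _ _
    rw [hcomm, collapse (fun h => (h z : ℝ)/m)]
    have hTsum : ∑ S : Fin m → Z, (T S z : ℝ) = m * N^(m-1) := by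
      have e : ∀ S : Fin m → Z, (T S z : ℝ) = ∑ i, if S i = z then (1:ℝ) else 0 := by
        intro S
        rw [Finset.sum_boole, hTdef]
      simp_rw [e]
      rw [Finset.sum_comm]
      simp_rw [hfix]
      rw [Finset.sum_const, Finset.card_univ, Fintype.card_fin, nsmul_eq_mul]
    simp_rw [div_eq_mul_inv, ← mul_assoc]
    rw [← Finset.sum_mul, ← Finset.mul_sum, hTsum]
    have h2 : (↑m : ℝ) * (↑m)⁻¹ = 1 := mul_inv_cancel₀ hm0
    calc c * (↑m * N ^ (m - 1)) * (↑m)⁻¹ = (c * N^(m-1)) * (↑m * (↑m)⁻¹) := by ring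
      _ = (1/N) * 1 := by rw [hpow, h2]
      _ = 1 * N⁻¹ := by ring
  -- main computation
  rw [affinity, tv]
  have hfun : ∀ p : Z × (Z → ℕ),
      min (margZ m P Q p.1 * margH m P Q p.2) (jointZH m P Q p.1 p.2)
        = W p.2 * min (1/N) ((p.2 p.1 : ℝ)/m) := by
    intro p
    rw [hmargZ, hmargH, hjoint, mul_comm (1/N) (W p.2),
      mul_comm ((p.2 p.1 : ℝ)/m) (W p.2)]
    exact (mul_min_of_nonneg _ _ (hW0 p.2)).symm
  rw [tsum_congr hfun]
  rw [tsum_eq_sum (s := univ ×ˢ 𝒯) (fun p hp => by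
    have : p.2 ∉ 𝒯 := fun hmem => hp (Finset.mem_product.mpr ⟨mem_univ _, hmem⟩)
    rw [hW_off p.2 this, zero_mul])]
  rw [Finset.sum_product, Finset.sum_comm]
  have hmin : ∀ a b : ℝ, min a b = (a + b - |a - b|)/2 := by
    intro a b; rcases le_total a b with hab|hab
    · rw [min_eq_left hab, abs_of_nonpos (by linarith)]; ring
    · rw [min_eq_right hab, abs_of_nonneg (by linarith)]; ring
  have hinner : ∀ h ∈ 𝒯, ∑ z, W h * min (1/N) ((h z:ℝ)/m)
      = W h - W h * ((∑ z, |1/N - (h z:ℝ)/m|)/2) := by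
    intro h hh
    obtain ⟨S, -, rfl⟩ := Finset.mem_image.mp hh
    rw [← Finset.mul_sum]
    simp_rw [hmin]
    have h1 : ∑ _z : Z, 1/N = 1 := by
      rw [Finset.sum_const, Finset.card_univ, ← hn, nsmul_eq_mul]
      field_simp
      exact hNdef.symm
    have h2 : ∑ z, (T S z:ℝ)/m = 1 := by
      rw [← Finset.sum_div, hsumT, div_self hm0]
    rw [Finset.sum_div (s := univ)]
    simp_rw [sub_div, add_div]
    rw [Finset.sum_sub_distrib, Finset.sum_add_distrib, ← Finset.sum_div (f := fun z => 1/N),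
      ← Finset.sum_div (f := fun z => (T S z:ℝ)/m), h1, h2]
    ring
  rw [Finset.sum_congr rfl hinner, Finset.sum_sub_distrib]
  have hsumW : ∑ h ∈ 𝒯, W h = 1 := by
    have := collapse (fun _ => 1)
    simp only [mul_one] at this
    rw [this, Finset.sum_const, Finset.card_univ, Fintype.card_fun, Fintype.card_fin,
      ← hn, nsmul_eq_mul, hcdef]
    push_cast
    rw [one_div, inv_pow, ← hNdef]
    rw [mul_inv_cancel₀ (pow_ne_zero _ hN0)]
  rw [hsumW]
  rw [collapse (fun h => (∑ z, |1/N - (h z:ℝ)/m|)/2)]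
  have hswap : ∑ S : Fin m → Z, c * ((∑ z, |1/N - (T S z:ℝ)/m|)/2)
      = ∑ z : Z, (∑ S : Fin m → Z, c * |1/N - (T S z:ℝ)/m|)/2 := by
    simp_rw [← mul_div_assoc, Finset.mul_sum]
    rw [← Finset.sum_div, Finset.sum_comm, Finset.sum_div]
  rw [hswap]
  have hz : ∀ z : Z, ∑ S : Fin m → Z, c * |1/N - (T S z:ℝ)/m|
      = ∑ k ∈ range (m+1),
          (m.choose k : ℝ) * (N - 1)^(m-k) * (c * |1/N - (k:ℝ)/m|) := by
    intro z
    have regroup : ∑ S : Fin m → Z, c * |1/N - (T S z:ℝ)/m|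
        = ∑ k ∈ range (m+1), ∑ S : Fin m → Z,
            (if T S z = k then (1:ℝ) else 0) * (c * |1/N - (k:ℝ)/m|) := by
      rw [Finset.sum_comm]
      apply Finset.sum_congr rfl; intro S _
      simp_rw [boole_mul]
      rw [Finset.sum_ite_eq (range (m+1)) (T S z)]
      rw [if_pos (Finset.mem_range.mpr (Nat.lt_succ_of_le (hT_le S z)))]
    rw [regroup]
    apply Finset.sum_congr rfl; intro k hk
    rw [← Finset.sum_mul]
    have := count_real (Z := Z) m z k
    rw [← hn] at this
    rw [hTdef]
    rw [this]
  simp_rw [hz]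
  -- final algebra
  have hfinal : ∑ z : Z, (∑ k ∈ range (m+1),
        (m.choose k : ℝ) * (N - 1)^(m-k) * (c * |1/N - (k:ℝ)/m|))/2
      = N / (2 * m) * ∑ k ∈ range (m + 1),
          (m.choose k : ℝ) * (1/N)^k * (1 - 1/N)^(m-k) * |(k:ℝ) - m/N| := by
    rw [Finset.sum_const, Finset.card_univ, ← hn, nsmul_eq_mul, ← hNdef]
    rw [Finset.sum_div, Finset.mul_sum, Finset.mul_sum]
    apply Finset.sum_congr rfl
    intro k hk
    have hk' : k ≤ m := Nat.lt_succ_iff.mp (Finset.mem_range.mp hk)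
    have hm1 : (1:ℝ) ≤ m := by exact_mod_cast hm
    have hmpos : (0:ℝ) < m := by linarith
    have e1 : c = (1/N)^k * (1/N)^(m-k) := by
      rw [hcdef, ← pow_add, Nat.add_sub_cancel' hk']
    have e2 : ((1:ℝ)/N)^(m-k) * (N-1)^(m-k) = (1-1/N)^(m-k) := by
      rw [← mul_pow]
      congr 1
      field_simp
    have e3 : |1/N - (k:ℝ)/m| = |(k:ℝ) - m/N| / m := by
      have hrw : (1:ℝ)/N - (k:ℝ)/m = -(((k:ℝ) - m/N)/m) := by
        field_simp
        ring
      rw [hrw, abs_neg, abs_div, abs_of_pos hmpos]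
    rw [e1, e3, ← e2]
    ring
  rw [hfinal]
  ring
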